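/- Let K⟨X⟩ be a free algebra with monomial ordering ≺, I an ideal with Gröbner basis 𝒢. The images of the normal words N(I) = {w ∈ 𝔅 : LM(g) ∤ w for all g ∈ 𝒢} form a K-vector-space basis of the quotient algebra K⟨X⟩/I. -/

import Mathlib

open scoped Classical

/-- Words in the letters `X_1, …, X_n`: the free monoid on `Fin n`. -/
abbrev Word (n : ℕ) := FreeMonoid (Fin n)

/-- The free associative `K`-algebra `K⟨X_1,…,X_n⟩`, realised as the monoid algebra of the
free monoid on `Fin n`. -/
abbrev FreeAlg (K : Type) [Field K] (n : ℕ) := MonoidAlgebra K (Word n)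

/-- The word `v` divides the word `u` if `u = w * v * s` for some words `w, s`. -/
def WDvd {n : ℕ} (v u : Word n) : Prop := ∃ w s : Word n, u = w * v * s

/-- The monomial of `K⟨X⟩` corresponding to a word. -/
noncomputable def mono {K : Type} [Field K] {n : ℕ} (w : Word n) : FreeAlg K n :=
  MonoidAlgebra.single w 1

/-- The two-sided ideal of `K⟨X⟩` generated by a set of words (a monomial ideal). -/
noncomputable def monIdeal (K : Type) [Field K] {n : ℕ} (Ω : Set (Word n)) :
    TwoSidedIdeal (FreeAlg K n) :=
  TwoSidedIdeal.span (mono '' Ω)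

/-- A ring is semiprime if `a R a = 0` implies `a = 0`. -/
def IsSemiprimeRing (R : Type*) [Ring R] : Prop :=
  ∀ a : R, (∀ r : R, a * r * a = 0) → a = 0

/-- A ring is semiprimitive (Jacobson semisimple) if its Jacobson radical is zero. -/
def IsSemiprimitiveRing (R : Type*) [Ring R] : Prop :=
  (⊥ : TwoSidedIdeal R).jacobson = ⊥

/-- A monomial ordering on the words: a multiplication-compatible well-ordering. -/
structure MonOrder (n : ℕ) where
  /-- the strict order relation -/
  lt : Word n → Word n → Prop
  trichotomous : ∀ u v : Word n, lt u v ∨ u = v ∨ lt v u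
  trans : ∀ {u v w : Word n}, lt u v → lt v w → lt u w
  wf : WellFounded lt
  mul_compat : ∀ u v w s : Word n, lt u v → lt (w * u * s) (w * v * s)
  one_lt : ∀ u w s : Word n, w * u * s ≠ u → lt u (w * u * s)

/-- The leading monomial (word) of a nonzero element of `K⟨X⟩` with respect to a monomial
ordering: the `≺`-largest word in its support (and `1` by convention for `0`). -/
noncomputable def LM {K : Type} [Field K] {n : ℕ} (o : MonOrder n) (f : FreeAlg K n) :
    Word n :=
  if h : ∃ w ∈ f.coeff.support, ∀ v ∈ f.coeff.support, v ≠ w → o.lt v w then h.choose else 1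

/-- The weight degree of a word, where the letter `i` has weight `wt i`. -/
def wdeg {n : ℕ} (wt : Fin n → ℕ) (u : Word n) : ℕ :=
  (FreeMonoid.toList u |>.map wt).sum

/-- `f` is homogeneous of degree `p` with respect to the weight grading. -/
def IsHomogeneous {K : Type} [Field K] {n : ℕ} (wt : Fin n → ℕ) (f : FreeAlg K n)
    (p : ℕ) : Prop :=
  ∀ w ∈ f.coeff.support, wdeg wt w = p

/-- The (highest-degree) leading homogeneous component of `f` with respect to the weight
grading. -/
noncomputable def LH {K : Type} [Field K] {n : ℕ} (wt : Fin n → ℕ) (f : FreeAlg K n) :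
    FreeAlg K n :=
  MonoidAlgebra.ofCoeff (Finsupp.filter (fun w => wdeg wt w = f.coeff.support.sup (wdeg wt)) f.coeff)

/-- `𝒢` is a Gröbner basis of the two-sided ideal `I` w.r.t. the monomial ordering `o`:
`𝒢 ⊆ I ∖ {0}` and the leading monomials of `I` and of `𝒢` generate the same monomial
ideal. -/
def IsGrobnerBasis {K : Type} [Field K] {n : ℕ} (o : MonOrder n)
    (𝒢 : Set (FreeAlg K n)) (I : TwoSidedIdeal (FreeAlg K n)) : Prop :=
  𝒢 ⊆ {f | f ∈ I ∧ f ≠ 0} ∧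
    monIdeal K (LM o '' {f : FreeAlg K n | f ∈ I ∧ f ≠ 0}) = monIdeal K (LM o '' 𝒢)

/-- The natural `K`-algebra structure on the quotient of a `K`-algebra by a ring
congruence. -/
noncomputable instance ringConQuotientAlgebra {K A : Type*} [CommSemiring K] [Semiring A]
    [Algebra K A] (c : RingCon A) : Algebra K c.Quotient :=
  { algebraMap := (RingCon.mk' c).comp (algebraMap K A)
    smul := (· • ·)
    commutes' := fun k => Quotient.ind' fun a =>
      congrArg (RingCon.toQuotient (c := c)) (Algebra.commutes k a)
    smul_def' := fun k => Quotient.ind' fun a =>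
      congrArg (RingCon.toQuotient (c := c)) (Algebra.smul_def k a) }

/-- The quotient map as a `K`-algebra homomorphism. -/
noncomputable def quotAlgHom {K A : Type*} [CommSemiring K] [Semiring A] [Algebra K A]
    (c : RingCon A) : A →ₐ[K] c.Quotient :=
  { RingCon.mk' c with commutes' := fun _ => rfl }

section Aux

variable {K : Type} [Field K] {n : ℕ}

lemma wdvd_refl (v : Word n) : WDvd v v := ⟨1, 1, by simp⟩

lemma wdvd_extend {v u : Word n} (a b : Word n) (h : WDvd v u) : WDvd v (a * u * b) := by
  obtain ⟨w, s, rfl⟩ := h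
  exact ⟨a * w, s * b, by simp [mul_assoc]⟩

lemma exists_max (o : MonOrder n) (s : Finset (Word n)) :
    s.Nonempty → ∃ w ∈ s, ∀ v ∈ s, v ≠ w → o.lt v w := by
  classical
  induction s using Finset.induction_on with
  | empty => intro h; simp at h
  | @insert a s ha ih =>
    intro _
    rcases s.eq_empty_or_nonempty with rfl | hne
    · refine ⟨a, Finset.mem_insert_self a _, ?_⟩
      intro v hv hva
      simp only [Finset.mem_insert, Finset.notMem_empty, or_false] at hv
      exact absurd hv hva
    · obtain ⟨w, hw, hmax⟩ := ih hne
      rcases o.trichotomous a w with h | h | h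
      · refine ⟨w, Finset.mem_insert_of_mem hw, ?_⟩
        intro v hv hvw
        rcases Finset.mem_insert.mp hv with rfl | hv'
        · exact h
        · exact hmax v hv' hvw
      · subst h
        refine ⟨a, Finset.mem_insert_self a _, ?_⟩
        intro v hv hva
        rcases Finset.mem_insert.mp hv with rfl | hv'
        · exact absurd rfl hva
        · exact hmax v hv' hva
      · refine ⟨a, Finset.mem_insert_self a _, ?_⟩
        intro v hv hva
        rcases Finset.mem_insert.mp hv with rfl | hv'
        · exact absurd rfl hva
        · by_cases hvw : v = w
          · exact hvw ▸ h
          · exact o.trans (hmax v hv' hvw) h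

lemma LM_spec (o : MonOrder n) {f : FreeAlg K n} (hf : f ≠ 0) :
    LM o f ∈ f.coeff.support ∧ ∀ v ∈ f.coeff.support, v ≠ LM o f → o.lt v (LM o f) := by
  have hne : f.coeff.support.Nonempty :=
    Finsupp.support_nonempty_iff.mpr (mt MonoidAlgebra.coeff_eq_zero.mp hf)
  have h : ∃ w ∈ f.coeff.support, ∀ v ∈ f.coeff.support, v ≠ w → o.lt v w := exists_max o _ hne
  rw [LM, dif_pos h]
  exact ⟨h.choose_spec.1, h.choose_spec.2⟩

lemma wconj_injective (a b : Word n) : Function.Injective (fun v : Word n => a * v * b) := by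
  intro x y h
  simp only at h
  have h1 : a * (x * b) = a * (y * b) := by
    rw [← mul_assoc, ← mul_assoc]; exact h
  exact mul_right_cancel (mul_left_cancel h1)

lemma single_eq_smul_mono (w : Word n) (c : K) :
    MonoidAlgebra.single w c = c • mono (K := K) w := by
  rw [mono, MonoidAlgebra.smul_single', mul_one]

lemma mono_mul_mono (a b : Word n) (f : FreeAlg K n) :
    mono (K := K) a * f * mono b = MonoidAlgebra.mapDomain (fun v => a * v * b) f := by
  induction f using MonoidAlgebra.induction_linear with
  | zero => simp
  | add f g hf hg => rw [mul_add, add_mul, hf, hg, MonoidAlgebra.mapDomain_add]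
  | single v c =>
    rw [MonoidAlgebra.mapDomain_single]
    show MonoidAlgebra.single a 1 * MonoidAlgebra.single v c * MonoidAlgebra.single b 1 = _
    rw [MonoidAlgebra.single_mul_single, MonoidAlgebra.single_mul_single, one_mul, mul_one]

lemma mem_monIdeal_support {Ω : Set (Word n)} {x : FreeAlg K n}
    (hx : x ∈ monIdeal K Ω) : ∀ w ∈ x.coeff.support, ∃ v ∈ Ω, WDvd v w := by
  classical
  have h0 : (0 : FreeAlg K n) ∈ {x : FreeAlg K n | ∀ w ∈ x.coeff.support, ∃ v ∈ Ω, WDvd v w} := by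
    intro w hw; simp at hw
  have hadd : ∀ {x y : FreeAlg K n},
      x ∈ {x : FreeAlg K n | ∀ w ∈ x.coeff.support, ∃ v ∈ Ω, WDvd v w} →
      y ∈ {x : FreeAlg K n | ∀ w ∈ x.coeff.support, ∃ v ∈ Ω, WDvd v w} →
      x + y ∈ {x : FreeAlg K n | ∀ w ∈ x.coeff.support, ∃ v ∈ Ω, WDvd v w} := by
    intro x y hx hy w hw
    rw [MonoidAlgebra.coeff_add] at hw
    rcases Finset.mem_union.mp (Finsupp.support_add hw) with h | h
    · exact hx w h
    · exact hy w h
  have hneg : ∀ {x : FreeAlg K n},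
      x ∈ {x : FreeAlg K n | ∀ w ∈ x.coeff.support, ∃ v ∈ Ω, WDvd v w} →
      -x ∈ {x : FreeAlg K n | ∀ w ∈ x.coeff.support, ∃ v ∈ Ω, WDvd v w} := by
    intro x hx w hw
    rw [MonoidAlgebra.coeff_neg, Finsupp.support_neg] at hw
    exact hx w hw
  have hl : ∀ {x y : FreeAlg K n},
      y ∈ {x : FreeAlg K n | ∀ w ∈ x.coeff.support, ∃ v ∈ Ω, WDvd v w} →
      x * y ∈ {x : FreeAlg K n | ∀ w ∈ x.coeff.support, ∃ v ∈ Ω, WDvd v w} := by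
    intro x y hy w hw
    obtain ⟨p, hp, q, hq, rfl⟩ := Finset.mem_mul.mp (MonoidAlgebra.support_coeff_mul_subset x y hw)
    obtain ⟨v, hv, hd⟩ := hy q hq
    have := wdvd_extend p (1 : Word n) hd
    rw [mul_one] at this
    exact ⟨v, hv, this⟩
  have hr : ∀ {x y : FreeAlg K n},
      x ∈ {x : FreeAlg K n | ∀ w ∈ x.coeff.support, ∃ v ∈ Ω, WDvd v w} →
      x * y ∈ {x : FreeAlg K n | ∀ w ∈ x.coeff.support, ∃ v ∈ Ω, WDvd v w} := by
    intro x y hx w hw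
    obtain ⟨p, hp, q, hq, rfl⟩ := Finset.mem_mul.mp (MonoidAlgebra.support_coeff_mul_subset x y hw)
    obtain ⟨v, hv, hd⟩ := hx p hp
    have := wdvd_extend (1 : Word n) q hd
    rw [one_mul] at this
    exact ⟨v, hv, this⟩
  have hmem := TwoSidedIdeal.mem_span_iff.mp hx
    (TwoSidedIdeal.mk' _ h0 hadd hneg hl hr) ?_
  · rwa [TwoSidedIdeal.mem_mk'] at hmem
  · rintro _ ⟨v, hv, rfl⟩
    rw [SetLike.mem_coe, TwoSidedIdeal.mem_mk']
    intro w hw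
    have : w = v := by
      have := Finsupp.support_single_subset hw
      simpa using this
    exact this ▸ ⟨v, hv, wdvd_refl v⟩

lemma quot_eq_zero_iff {I : TwoSidedIdeal (FreeAlg K n)} (f : FreeAlg K n) :
    quotAlgHom (K := K) I.ringCon f = 0 ↔ f ∈ I := by
  have h1 : quotAlgHom (K := K) I.ringCon f = (f : I.ringCon.Quotient) := rfl
  have h2 : (0 : I.ringCon.Quotient) = ((0 : FreeAlg K n) : I.ringCon.Quotient) := rfl
  rw [h1, h2, RingCon.eq]
  rw [show (I.ringCon f 0) = (f - 0 ∈ I) from propext (I.rel_iff f 0), sub_zero]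

lemma mono_apply_self (w : Word n) : (mono (K := K) w).coeff w = 1 := Finsupp.single_eq_same

end Aux

set_option synthInstance.maxHeartbeats 1000000 in
/-- **Macaulay basis theorem for noncommutative Gröbner bases**: if `𝒢` is a Gröbner basis
of an ideal `I` of `K⟨X⟩` w.r.t. a monomial ordering `≺`, then the images of the normal
words `N(I) = {w : LM(g) ∤ w for all g ∈ 𝒢}` form a `K`-vector space basis of `K⟨X⟩/I`. -/
theorem normal_words_basis {K : Type} [Field K] {n : ℕ}
    (o : MonOrder n) (I : TwoSidedIdeal (FreeAlg K n)) (𝒢 : Set (FreeAlg K n))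
    (hGB : IsGrobnerBasis o 𝒢 I) :
    LinearIndependent K
        (fun u : {w : Word n // ∀ g ∈ 𝒢, ¬ WDvd (LM o g) w} =>
          quotAlgHom (K := K) I.ringCon (mono u.1)) ∧
      Submodule.span K
        (Set.range (fun u : {w : Word n // ∀ g ∈ 𝒢, ¬ WDvd (LM o g) w} =>
          quotAlgHom (K := K) I.ringCon (mono u.1))) = ⊤ := by
  classical
  obtain ⟨hGsub, hGeq⟩ := hGB
  constructor
  · -- linear independence
    rw [linearIndependent_iff]
    intro l hl
    by_contra hl0
    set f : FreeAlg K n := MonoidAlgebra.ofCoeff (Finsupp.mapDomain Subtype.val l) with hf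
    have hf0 : f ≠ 0 := by
      intro h
      exact hl0 (Finsupp.mapDomain_injective Subtype.val_injective
        (by simpa [Finsupp.mapDomain_zero, hf] using h))
    have hlc : Finsupp.linearCombination K
        (fun u : {w : Word n // ∀ g ∈ 𝒢, ¬ WDvd (LM o g) w} =>
          quotAlgHom (K := K) I.ringCon (mono u.1)) l
        = quotAlgHom (K := K) I.ringCon f := by
      rw [Finsupp.linearCombination_apply, hf, Finsupp.mapDomain, MonoidAlgebra.ofCoeff_finsuppSum,
        map_finsuppSum]
      exact Finsupp.sum_congr fun u _ => by
        rw [MonoidAlgebra.ofCoeff_single, single_eq_smul_mono, map_smul]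
    have hfI : f ∈ I := (quot_eq_zero_iff f).mp (by rw [← hlc, hl])
    obtain ⟨hmem, -⟩ := LM_spec o hf0
    have hsupp : f.coeff.support ⊆ l.support.image Subtype.val := Finsupp.mapDomain_support
    obtain ⟨u, hu, huv⟩ := Finset.mem_image.mp (hsupp hmem)
    have hmono : mono (K := K) (LM o f) ∈ monIdeal K (LM o '' 𝒢) := by
      rw [← hGeq]
      exact TwoSidedIdeal.subset_span ⟨LM o f, ⟨f, ⟨hfI, hf0⟩, rfl⟩, rfl⟩
    have hdvd := mem_monIdeal_support hmono (LM o f)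
      (by
        rw [Finsupp.mem_support_iff]
        show (Finsupp.single (LM o f) (1 : K)) (LM o f) ≠ 0
        rw [Finsupp.single_eq_same]; exact one_ne_zero)
    obtain ⟨v, ⟨g, hg, rfl⟩, hdv⟩ := hdvd
    exact u.2 g hg (by rw [huv]; exact hdv)
  · -- spanning
    rw [Submodule.eq_top_iff']
    have key : ∀ f : FreeAlg K n,
        (∀ w ∈ f.coeff.support, quotAlgHom (K := K) I.ringCon (mono w) ∈
          Submodule.span K (Set.range
            (fun u : {w : Word n // ∀ g ∈ 𝒢, ¬ WDvd (LM o g) w} =>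
              quotAlgHom (K := K) I.ringCon (mono u.1)))) →
        quotAlgHom (K := K) I.ringCon f ∈
          Submodule.span K (Set.range
            (fun u : {w : Word n // ∀ g ∈ 𝒢, ¬ WDvd (LM o g) w} =>
              quotAlgHom (K := K) I.ringCon (mono u.1))) := by
      intro f hfw
      have hrepr : quotAlgHom (K := K) I.ringCon f
          = f.coeff.sum fun w c => c • quotAlgHom (K := K) I.ringCon (mono w) := by
        conv_lhs => rw [← MonoidAlgebra.sum_coeff_single f]
        rw [map_finsuppSum]
        exact Finsupp.sum_congr fun w _ => by rw [single_eq_smul_mono, map_smul]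
      rw [hrepr, Finsupp.sum]
      exact Submodule.sum_mem _ fun w hw => Submodule.smul_mem _ _ (hfw w hw)
    have main : ∀ w : Word n, quotAlgHom (K := K) I.ringCon (mono w) ∈
        Submodule.span K (Set.range
          (fun u : {w : Word n // ∀ g ∈ 𝒢, ¬ WDvd (LM o g) w} =>
            quotAlgHom (K := K) I.ringCon (mono u.1))) := by
      intro w
      induction w using WellFounded.induction o.wf with
      | _ w ih =>
        by_cases hw : ∀ g ∈ 𝒢, ¬ WDvd (LM o g) w
        · exact Submodule.subset_span ⟨⟨w, hw⟩, rfl⟩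
        · push_neg at hw
          obtain ⟨g, hg, a, b, hab⟩ := hw
          have hg0 : g ≠ 0 := (hGsub hg).2
          have hgI : g ∈ I := (hGsub hg).1
          obtain ⟨hLm, hLmax⟩ := LM_spec o hg0
          have hc : g.coeff (LM o g) ≠ 0 := Finsupp.mem_support_iff.mp hLm
          have hhI : (mono (K := K) a * g * mono b) ∈ I :=
            I.mul_mem_right _ _ (I.mul_mem_left _ _ hgI)
          have hmap : mono (K := K) a * g * mono b
              = MonoidAlgebra.mapDomain (fun v => a * v * b) g := mono_mul_mono a b g
          set f' : FreeAlg K n := mono w - (g.coeff (LM o g))⁻¹ • (mono a * g * mono b) with hf'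
          have hquot : quotAlgHom (K := K) I.ringCon (mono w)
              = quotAlgHom (K := K) I.ringCon f' := by
            have h1 : quotAlgHom (K := K) I.ringCon (mono (K := K) a * g * mono b) = 0 :=
              (quot_eq_zero_iff _).mpr hhI
            rw [hf', map_sub, map_smul, h1, smul_zero, sub_zero]
          have h2 : (MonoidAlgebra.mapDomain (fun v => a * v * b) g).coeff (a * LM o g * b)
              = g.coeff (LM o g) := by
            exact Finsupp.mapDomain_apply (wconj_injective a b) g.coeff (LM o g)
          have hfw : f'.coeff w = 0 := by
            have e1 : f'.coeff w = (mono (K := K) w).coeff w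
                - ((((g.coeff (LM o g))⁻¹ • (mono (K := K) a * g * mono b)) : FreeAlg K n).coeff w) := by
              rw [hf']; exact Finsupp.sub_apply _ _ _
            have e2 : ((((g.coeff (LM o g))⁻¹ • (mono (K := K) a * g * mono b)) : FreeAlg K n).coeff w)
                = (g.coeff (LM o g))⁻¹ • (((mono (K := K) a * g * mono b) : FreeAlg K n).coeff w) :=
              Finsupp.smul_apply _ _ _
            rw [e1, e2, mono_apply_self, hmap, hab, h2, smul_eq_mul,
              inv_mul_cancel₀ hc, sub_self]
          have hsup : ∀ v ∈ f'.coeff.support, o.lt v w := by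
            intro v hv
            have hvne : v ≠ w := fun h =>
              (Finsupp.mem_support_iff.mp hv) (h ▸ hfw)
            have hv' : v ∈ (mono (K := K) w).coeff.support ∪
                (mono (K := K) a * g * mono b).coeff.support := by
              have h4 := Finsupp.support_sub
                (by rw [hf', MonoidAlgebra.coeff_sub] at hv; exact hv)
              rcases Finset.mem_union.mp h4 with h | h
              · exact Finset.mem_union_left _ h
              · rw [MonoidAlgebra.coeff_smul] at h
                exact Finset.mem_union_right _ (Finsupp.support_smul h)
            rcases Finset.mem_union.mp hv' with h | h
            · exact absurd (by simpa using Finsupp.support_single_subset h) hvne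
            · rw [hmap] at h
              obtain ⟨u, hu, huv⟩ := Finset.mem_image.mp (Finsupp.mapDomain_support h)
              have huv' : a * u * b = v := huv
              subst huv'
              have hune : u ≠ LM o g := fun h => hvne (by rw [h, ← hab])
              have h5 := o.mul_compat u (LM o g) a b (hLmax u hu hune)
              rwa [← hab] at h5
          rw [hquot]
          exact key f' fun v hv => ih v (hsup v hv)
    intro x
    induction x using Quotient.inductionOn' with
    | h f => exact key f fun w _ => main w
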